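/- Let G be a locally compact, Hausdorff, second countable topological group which is not discrete, let μ be a left Haar measure on G, and let ρ be a Borel probability measure on G that is absolutely continuous with respect to μ. Then for every ε > 0 there exists a Borel set X ⊆ G with μ(X) > 0 such that ρ(ωX) < ε for every ω ∈ G; in particular sup_{ω ∈ G} ρ(ωX) < 1. -/

import Mathlib

open MeasureTheory ENNReal Filter Topology

/-- Let `G` be a non-discrete locally compact, Hausdorff, second countable group with left Haar
measure `μ`, and `ρ` a Borel probability measure with `ρ ≪ μ`. Then for every `ε > 0` there is a
Borel set `X` with `μ(X) > 0` such that `ρ(ωX) < ε` for every `ω ∈ G`; in particular there is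
such an `X` with `sup_ω ρ(ωX) < 1`. -/
theorem exists_translate_uniformly_small
    {G : Type*} [Group G] [TopologicalSpace G] [IsTopologicalGroup G]
    [LocallyCompactSpace G] [T2Space G] [SecondCountableTopology G]
    [MeasurableSpace G] [BorelSpace G]
    (hG : ¬ DiscreteTopology G)
    (μ : Measure G) [μ.IsHaarMeasure]
    (ρ : Measure G) [IsProbabilityMeasure ρ] (hρ : ρ ≪ μ) :
    (∀ ε : ℝ≥0∞, 0 < ε → ∃ X : Set G, MeasurableSet X ∧ 0 < μ X ∧
      ∀ ω : G, ρ ((fun t => ω * t) '' X) < ε) ∧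
    (∃ X : Set G, MeasurableSet X ∧ 0 < μ X ∧
      (⨆ ω : G, ρ ((fun t => ω * t) '' X)) < 1) := by
  -- the identity is not isolated
  haveI hnb : (𝓝[≠] (1 : G)).NeBot := by
    refine ⟨fun hbot => hG ?_⟩
    exact discreteTopology_iff_isOpen_singleton_one.mpr
      ((isOpen_singleton_iff_punctured_nhds (1 : G)).mpr hbot)
  haveI : NullSingletonClass μ := inferInstance
  have key : ∀ ε : ℝ≥0∞, 0 < ε → ∃ X : Set G, MeasurableSet X ∧ 0 < μ X ∧
      ∀ ω : G, ρ ((fun t => ω * t) '' X) < ε := by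
    intro ε hε
    -- Radon–Nikodym density
    have hρeq : μ.withDensity (ρ.rnDeriv μ) = ρ := Measure.withDensity_rnDeriv_eq ρ μ hρ
    have hint : ∫⁻ x, ρ.rnDeriv μ x ∂μ ≠ ∞ := (Measure.lintegral_rnDeriv_lt_top ρ μ).ne
    obtain ⟨δ, hδ, hδ'⟩ := exists_pos_setLIntegral_lt_of_measure_lt hint hε.ne'
    -- a small open set around 1
    have h1 : μ {(1 : G)} < δ := by simpa [measure_singleton] using hδ
    obtain ⟨U, hU1, hUopen, hUlt⟩ := Set.exists_isOpen_lt_of_lt _ _ h1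
    refine ⟨U, hUopen.measurableSet,
      hUopen.measure_pos μ ⟨1, hU1 rfl⟩, fun ω => ?_⟩
    have himg : (fun t => ω * t) '' U = (fun t => ω⁻¹ * t) ⁻¹' U := by
      ext x; simp [Set.mem_image, eq_comm, eq_inv_mul_iff_mul_eq]
    have hmeas : MeasurableSet ((fun t => ω⁻¹ * t) ⁻¹' U) :=
      hUopen.measurableSet.preimage (measurable_const_mul _)
    have hμsmall : μ ((fun t => ω⁻¹ * t) ⁻¹' U) < δ := by
      rw [measure_preimage_mul μ ω⁻¹ U]; exact hUlt
    calc ρ ((fun t => ω * t) '' U) = ρ ((fun t => ω⁻¹ * t) ⁻¹' U) := by rw [himg]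
      _ = ∫⁻ x in (fun t => ω⁻¹ * t) ⁻¹' U, ρ.rnDeriv μ x ∂μ :=
          (Measure.setLIntegral_rnDeriv' hρ hmeas).symm
      _ < ε := hδ' _ hμsmall
  refine ⟨key, ?_⟩
  obtain ⟨X, hXm, hXpos, hX⟩ := key (1 / 2) (by norm_num)
  refine ⟨X, hXm, hXpos, lt_of_le_of_lt (iSup_le fun ω => (hX ω).le) ?_⟩
  norm_num
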